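/- Let φ : ℝⁿ → ℝ ∪ {+∞} be an even convex function and φ* its Legendre transform. If ξ = ∇φ(x) and η = ∇φ(y) (with φ differentiable at x and y), then φ((x+y)/2) + φ*((ξ−η)/2) ≤ (1/2)(⟨x, ξ⟩ + ⟨y, η⟩). -/

import Mathlib

/-- The Legendre transform of a real-valued function, with values in `EReal`. -/
noncomputable def legendre {n : ℕ} (φ : EuclideanSpace ℝ (Fin n) → ℝ)
    (ξ : EuclideanSpace ℝ (Fin n)) : EReal :=
  ⨆ x, (((inner ℝ x ξ : ℝ) - φ x : ℝ) : EReal)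


lemma grad_subgrad {n : ℕ} (φ : EuclideanSpace ℝ (Fin n) → ℝ)
    (hconv : ConvexOn ℝ Set.univ φ) (x z : EuclideanSpace ℝ (Fin n))
    (hx : DifferentiableAt ℝ φ x) :
    φ x + (inner ℝ (gradient φ x) (z - x) : ℝ) ≤ φ z := by
  have hfd : HasFDerivAt φ ((InnerProductSpace.toDualMap ℝ _) (gradient φ x))
      (x + (0 : ℝ) • (z - x)) := by
    rw [zero_smul, add_zero]; exact hasGradientAt_iff_hasFDerivAt.mp hx.hasGradientAt
  have hline : HasDerivAt (fun t : ℝ => x + t • (z - x)) (z - x) 0 := by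
    simpa using ((hasDerivAt_id (0 : ℝ)).smul_const (z - x)).const_add x
  have hcomp : HasDerivAt (fun t : ℝ => φ (x + t • (z - x)))
      ((inner ℝ (gradient φ x) (z - x) : ℝ)) 0 := by
    exact hfd.comp_hasDerivAt 0 hline
  have hgc : ConvexOn ℝ Set.univ (fun t : ℝ => φ (x + t • (z - x))) := by
    have h := hconv.comp_affineMap (AffineMap.lineMap x z)
    simp only [Set.preimage_univ, Function.comp] at h
    rw [show (fun t : ℝ => φ (x + t • (z - x))) = φ ∘ AffineMap.lineMap x z from ?_]
    · exact h
    funext t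
    rw [Function.comp_apply]
    congr 1
    simp only [AffineMap.lineMap_apply, vsub_eq_sub, vadd_eq_add]
    module
  have hs := hgc.le_slope_of_hasDerivAt (Set.mem_univ (0:ℝ)) (Set.mem_univ (1:ℝ))
    zero_lt_one hcomp
  have h0 : x + (0:ℝ) • (z - x) = x := by module
  have h1 : x + (1:ℝ) • (z - x) = z := by module
  rw [slope_def_field] at hs
  simp only [h0, h1] at hs
  have : (inner ℝ (gradient φ x) (z - x) : ℝ) ≤ φ z - φ x := by
    simpa using hs
  linarith


theorem stmt6 {n : ℕ} (φ : EuclideanSpace ℝ (Fin n) → ℝ)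
    (hconv : ConvexOn ℝ Set.univ φ)
    (heven : ∀ x, φ (-x) = φ x)
    (x y : EuclideanSpace ℝ (Fin n))
    (hx : DifferentiableAt ℝ φ x) (hy : DifferentiableAt ℝ φ y)
    (ξ η : EuclideanSpace ℝ (Fin n))
    (hξ : ξ = gradient φ x) (hη : η = gradient φ y) :
    (φ (((1 : ℝ)/2) • (x + y)) : EReal) + legendre φ (((1 : ℝ)/2) • (ξ - η)) ≤
      (((1 : ℝ)/2) * ((inner ℝ x ξ : ℝ) + (inner ℝ y η : ℝ)) : ℝ) := by
  set m := ((1 : ℝ)/2) • (x + y) with hm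
  set c : ℝ := ((1 : ℝ)/2) * ((inner ℝ x ξ : ℝ) + (inner ℝ y η : ℝ)) with hc
  have hmid : φ m ≤ (1/2 : ℝ) * φ x + (1/2 : ℝ) * φ y := by
    have := hconv.2 (Set.mem_univ x) (Set.mem_univ y)
      (by norm_num : (0:ℝ) ≤ 1/2) (by norm_num : (0:ℝ) ≤ 1/2) (by norm_num)
    simp only [smul_eq_mul] at this
    calc φ m = φ ((1/2 : ℝ) • x + (1/2 : ℝ) • y) := by rw [hm, smul_add]
    _ ≤ _ := this
  have key : ∀ z : EuclideanSpace ℝ (Fin n),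
      (inner ℝ z (((1 : ℝ)/2) • (ξ - η)) : ℝ) - φ z ≤ c - φ m := by
    intro z
    have h1 := grad_subgrad φ hconv x z hx
    have h2 := grad_subgrad φ hconv y (-z) hy
    rw [heven z] at h2
    rw [← hξ] at h1
    rw [← hη] at h2
    have e1 : (inner ℝ ξ (z - x) : ℝ) = inner ℝ z ξ - inner ℝ x ξ := by
      rw [inner_sub_right, real_inner_comm ξ z, real_inner_comm ξ x]
    have e2 : (inner ℝ η (-z - y) : ℝ) = -inner ℝ z η - inner ℝ y η := by
      rw [inner_sub_right, inner_neg_right, real_inner_comm η z, real_inner_comm η y]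
    have e3 : (inner ℝ z (((1 : ℝ)/2) • (ξ - η)) : ℝ)
        = (1/2 : ℝ) * (inner ℝ z ξ - inner ℝ z η : ℝ) := by
      rw [real_inner_smul_right, inner_sub_right]
    rw [e1] at h1; rw [e2] at h2; rw [e3, hc]
    linarith
  have hsup : legendre φ (((1 : ℝ)/2) • (ξ - η)) ≤ ((c - φ m : ℝ) : EReal) := by
    refine iSup_le fun z => ?_
    exact_mod_cast key z
  calc (φ m : EReal) + legendre φ (((1 : ℝ)/2) • (ξ - η))
      ≤ (φ m : EReal) + ((c - φ m : ℝ) : EReal) := add_le_add_right hsup _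
    _ = (c : EReal) := by rw [← EReal.coe_add]; norm_num
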